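/- Let ρ be the topology on ℝ with base {U \ E : U Euclidean-open, E countable}. Then (ℝ, ρ) is a Menger space: for every sequence ⟨A_n⟩ of ρ-open covers of ℝ there exist finite subfamilies B_n ⊆ A_n with ⋃_n ⋃B_n = ℝ. -/
import Mathlib


open Set Topology

/-- A filter base on `X`: a nonempty family of subsets of `X`, not containing `∅`,
closed under pairwise intersections. -/
def FilterBaseOn (X : Type*) (F : Set (Set X)) : Prop :=
  F.Nonempty ∧ ∅ ∉ F ∧ ∀ A ∈ F, ∀ B ∈ F, A ∩ B ∈ F

/-- `F` converges to the set `W`: every open set containing `W` contains a member of `F`. -/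
def ConvergesTo {X : Type*} [TopologicalSpace X] (F : Set (Set X)) (W : Set X) : Prop :=
  ∀ U : Set X, IsOpen U → W ⊆ U → ∃ A ∈ F, A ⊆ U

/-- `F` is total: every filter base extending `F` has nonempty adherence
(intersection of the closures of all its members). -/
def TotalFB {X : Type*} [TopologicalSpace X] (F : Set (Set X)) : Prop :=
  ∀ H : Set (Set X), FilterBaseOn X H → F ⊆ H → (⋂ A ∈ H, closure A).Nonempty

/-- `F` is stable under countable intersections: every countable subfamily of `F`
has a member of `F` contained in its intersection. -/
def StableCI {X : Type*} (F : Set (Set X)) : Prop :=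
  ∀ S ⊆ F, S.Countable → ∃ H ∈ F, H ⊆ ⋂₀ S

/-- `F` is ω-closed: the intersection of any nonempty countable subfamily of `F` belongs to `F`. -/
def OmegaClosedFB {X : Type*} (F : Set (Set X)) : Prop :=
  ∀ S ⊆ F, S.Countable → S.Nonempty → ⋂₀ S ∈ F

/-- `F` is δ-stable: every nonempty countable subfamily of `F` has nonempty intersection. -/
def DeltaStableFB {X : Type*} (F : Set (Set X)) : Prop :=
  ∀ S ⊆ F, S.Countable → S.Nonempty → (⋂₀ S).Nonempty

/-- `G_δ(K)`: the family of Gδ subsets (countable intersections of open sets) containing `K`. -/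
def GdeltaNbhds {X : Type*} [TopologicalSpace X] (K : Set X) : Set (Set X) :=
  {G | K ⊆ G ∧ IsGδ G}

/-- `F ∨ G = {F₀ ∩ F₁ : F₀, F₁ ∈ F ∪ G}`. -/
def joinFB {X : Type*} (F G : Set (Set X)) : Set (Set X) :=
  {A | ∃ F₀ ∈ F ∪ G, ∃ F₁ ∈ F ∪ G, A = F₀ ∩ F₁}

/-- `X` is totally Lindelöf: every filter base stable under countable intersections
extends to a total filter base stable under countable intersections. -/
def TotallyLindelofSpace (X : Type*) [TopologicalSpace X] : Prop :=
  ∀ F : Set (Set X), FilterBaseOn X F → StableCI F →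
    ∃ H : Set (Set X), FilterBaseOn X H ∧ StableCI H ∧ F ⊆ H ∧ TotalFB H

/-- `X` is Alster: every cover of `X` by Gδ sets such that every compact subset of `X`
is contained in a single member admits a countable subcover. -/
def AlsterSpace (X : Type*) [TopologicalSpace X] : Prop :=
  ∀ 𝒢 : Set (Set X), (∀ G ∈ 𝒢, IsGδ G) → (∀ K : Set X, IsCompact K → ∃ G ∈ 𝒢, K ⊆ G) →
    ∃ 𝒞 ⊆ 𝒢, 𝒞.Countable ∧ ⋃₀ 𝒞 = Set.univ

/-- `D` is a discrete subset: each of its points has an open neighborhood meeting `D`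
only in that point. -/
def IsDiscreteSubset {X : Type*} [TopologicalSpace X] (D : Set X) : Prop :=
  ∀ a ∈ D, ∃ U : Set X, IsOpen U ∧ U ∩ D = {a}

/-- The first uncountable ordinal ω₁. -/
noncomputable def omega1 : Ordinal := (Cardinal.aleph 1).ord

/-- The countable-complement refinement of the usual topology on `ℝ`, generated by the sets
`U \ E` with `U` Euclidean-open and `E` countable. -/
def rho : TopologicalSpace ℝ :=
  TopologicalSpace.generateFrom
    {A | ∃ (U E : Set ℝ), IsOpen U ∧ E.Countable ∧ A = U \ E}


lemma rho_basic {V : Set ℝ} (hV : @IsOpen ℝ rho V) :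
    ∀ x ∈ V, ∃ U E : Set ℝ, IsOpen U ∧ E.Countable ∧ x ∈ U \ E ∧ U \ E ⊆ V := by
  have hV' : TopologicalSpace.GenerateOpen
      {A | ∃ (U E : Set ℝ), IsOpen U ∧ E.Countable ∧ A = U \ E} V := hV
  clear hV
  induction hV' with
  | basic s hs =>
      obtain ⟨U, E, hU, hE, rfl⟩ := hs
      exact fun x hx => ⟨U, E, hU, hE, hx, subset_rfl⟩
  | univ => exact fun x _ => ⟨Set.univ, ∅, isOpen_univ, countable_empty, by simp, by simp⟩
  | inter s t _ _ ihs iht =>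
      intro x hx
      obtain ⟨U₁, E₁, hU₁, hE₁, hx₁, hsub₁⟩ := ihs x hx.1
      obtain ⟨U₂, E₂, hU₂, hE₂, hx₂, hsub₂⟩ := iht x hx.2
      refine ⟨U₁ ∩ U₂, E₁ ∪ E₂, hU₁.inter hU₂, hE₁.union hE₂,
        ⟨⟨hx₁.1, hx₂.1⟩, ?_⟩, ?_⟩
      · rintro (h | h); exacts [hx₁.2 h, hx₂.2 h]
      · rintro y ⟨⟨hy₁, hy₂⟩, hyE⟩
        exact ⟨hsub₁ ⟨hy₁, fun h => hyE (Or.inl h)⟩,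
          hsub₂ ⟨hy₂, fun h => hyE (Or.inr h)⟩⟩
  | sUnion S _ ih =>
      intro x hx
      obtain ⟨s, hsS, hxs⟩ := hx
      obtain ⟨U, E, hU, hE, hxUE, hsub⟩ := ih s hsS x hxs
      exact ⟨U, E, hU, hE, hxUE, hsub.trans (Set.subset_sUnion_of_mem hsS)⟩

theorem stmt8 (A : ℕ → Set (Set ℝ))
    (hopen : ∀ n, ∀ U ∈ A n, @IsOpen ℝ rho U)
    (hcov : ∀ n, ⋃₀ (A n) = Set.univ) :
    ∃ B : ℕ → Set (Set ℝ), (∀ n, B n ⊆ A n ∧ (B n).Finite) ∧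
      (⋃ n, ⋃₀ (B n)) = Set.univ := by
  have hx : ∀ n (x : ℝ), ∃ V ∈ A n, ∃ U E : Set ℝ,
      IsOpen U ∧ E.Countable ∧ x ∈ U \ E ∧ U \ E ⊆ V := by
    intro n x
    have : x ∈ ⋃₀ A n := by rw [hcov n]; trivial
    obtain ⟨V, hVA, hxV⟩ := this
    obtain ⟨U, E, hU, hE, hxUE, hsub⟩ := rho_basic (hopen n V hVA) x hxV
    exact ⟨V, hVA, U, E, hU, hE, hxUE, hsub⟩
  choose V hVA U E hU hE hxUE hsub using hx
  have hcpt : ∀ n : ℕ, ∃ t : Finset ℝ,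
      Set.Icc (-(n:ℝ)) n ⊆ ⋃ y ∈ t, U n y := by
    intro n
    refine isCompact_Icc.elim_finite_subcover (U n) (fun y => hU n y) ?_
    intro z _
    exact Set.mem_iUnion.2 ⟨z, (hxUE n z).1⟩
  choose t ht using hcpt
  set Etot : Set ℝ := insert 0 (⋃ n, ⋃ y ∈ (t n : Set ℝ), E n y) with hEtot
  have hEc : Etot.Countable := by
    refine (Set.countable_iUnion fun n => ?_).insert 0
    exact (t n).countable_toSet.biUnion fun y _ => hE n y
  obtain ⟨f, hf⟩ := hEc.exists_eq_range ⟨0, Set.mem_insert 0 _⟩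
  have hfk : ∀ k : ℕ, ∃ W ∈ A (2 * k + 1), f k ∈ W := by
    intro k
    have : f k ∈ ⋃₀ A (2 * k + 1) := by rw [hcov]; trivial
    obtain ⟨W, hWA, hfW⟩ := this
    exact ⟨W, hWA, hfW⟩
  choose W hWA hfW using hfk
  refine ⟨fun m => if m % 2 = 0 then (fun y => V m y) '' (t m : Set ℝ)
      else {W (m / 2)}, fun m => ?_, ?_⟩
  · by_cases hm : m % 2 = 0
    · simp only [if_pos hm]
      refine ⟨?_, (t m).finite_toSet.image _⟩
      rintro _ ⟨y, _, rfl⟩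
      exact hVA m y
    · simp only [if_neg hm]
      refine ⟨?_, Set.finite_singleton _⟩
      intro s hs
      rw [Set.mem_singleton_iff] at hs
      subst hs
      have h2 : 2 * (m / 2) + 1 = m := by omega
      simpa [h2] using hWA (m / 2)
  · apply Set.eq_univ_of_forall
    intro x
    by_cases hxE : x ∈ Etot
    · rw [hf] at hxE
      obtain ⟨k, rfl⟩ := hxE
      refine Set.mem_iUnion.2 ⟨2 * k + 1, ?_⟩
      have h1 : (2 * k + 1) % 2 ≠ 0 := by omega
      have h2 : (2 * k + 1) / 2 = k := by omega
      simp only [if_neg h1, h2]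
      exact ⟨W k, rfl, hfW k⟩
    · set m : ℕ := 2 * ⌈|x|⌉₊ with hm
      have hxI : x ∈ Set.Icc (-(m:ℝ)) m := by
        have h1 := Nat.le_ceil |x|
        have h2 := neg_abs_le x
        have h3 := le_abs_self x
        have h4 : (⌈|x|⌉₊ : ℝ) ≤ (m : ℝ) := by
          rw [hm]; push_cast; nlinarith [Nat.cast_nonneg (α := ℝ) ⌈|x|⌉₊]
        constructor <;> nlinarith
      obtain ⟨y, hyt, hxU⟩ := Set.mem_iUnion₂.1 (ht m hxI)
      refine Set.mem_iUnion.2 ⟨m, ?_⟩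
      have h1 : m % 2 = 0 := by omega
      simp only [if_pos h1]
      refine ⟨V m y, ⟨y, hyt, rfl⟩, hsub m y ⟨hxU, fun hxEn => hxE ?_⟩⟩
      exact Set.mem_insert_of_mem _ (Set.mem_iUnion.2 ⟨m, Set.mem_biUnion hyt hxEn⟩)
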